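/- Under the conditions of the previous item (u* minimizes F on the L² sphere of radius √m with negative minimum value I_m < 0, and the Pohozaev identity ((N−2)/2)‖∇u*‖₂² + N((μ*/2)‖u*‖₂² − ∫G(u*)) = 0 holds), the Lagrange multiplier is positive: μ* > 0. Indeed (μ*N/2)m = −N F(u*) + ‖∇u*‖₂² ≥ −N I_m > 0. -/
import Mathlib


open MeasureTheory Real Filter RealInnerProductSpace

noncomputable section

abbrev Euc (N : ℕ) := EuclideanSpace ℝ (Fin N)

def gradSq {N : ℕ} (u : Euc N → ℝ) : ℝ := ∫ x, ‖gradient u x‖ ^ 2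

def l2Sq {N : ℕ} (u : Euc N → ℝ) : ℝ := ∫ x, (u x) ^ 2

def intG {N : ℕ} (G : ℝ → ℝ) (u : Euc N → ℝ) : ℝ := ∫ x, G (u x)

def Ifun {N : ℕ} (G : ℝ → ℝ) (m lam : ℝ) (u : Euc N → ℝ) : ℝ :=
  (1 / 2) * gradSq u - intG G u + (Real.exp lam / 2) * (l2Sq u - m)

def Jfun {N : ℕ} (G : ℝ → ℝ) (m θ lam : ℝ) (u : Euc N → ℝ) : ℝ :=
  (1 / 2) * Real.exp (((N : ℝ) - 2) * θ) * gradSq u - Real.exp ((N : ℝ) * θ) * intG G u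
    + (Real.exp lam / 2) * (Real.exp ((N : ℝ) * θ) * l2Sq u - m)

def Pfun {N : ℕ} (G : ℝ → ℝ) (lam : ℝ) (u : Euc N → ℝ) : ℝ :=
  (((N : ℝ) - 2) / 2) * gradSq u + (N : ℝ) * ((Real.exp lam / 2) * l2Sq u - intG G u)

def Ihat {N : ℕ} (G : ℝ → ℝ) (lam : ℝ) (u : Euc N → ℝ) : ℝ :=
  (1 / 2) * gradSq u + (Real.exp lam / 2) * l2Sq u - intG G u

def Ffun {N : ℕ} (G : ℝ → ℝ) (u : Euc N → ℝ) : ℝ :=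
  (1 / 2) * gradSq u - intG G u

def duI {N : ℕ} (g : ℝ → ℝ) (lam : ℝ) (u v : Euc N → ℝ) : ℝ :=
  (∫ x, ⟪gradient u x, gradient v x⟫) - (∫ x, g (u x) * v x)
    + Real.exp lam * ∫ x, u x * v x

def h1NormSq {N : ℕ} (u : Euc N → ℝ) : ℝ := gradSq u + l2Sq u

theorem stmt_18 {N : ℕ} (hN : 2 ≤ N) (G : ℝ → ℝ) (m μ Im : ℝ) (hm : 0 < m)
    (hIm : Im < 0) (u : Euc N → ℝ)
    (hFu : Ffun G u = Im) (hsphere : l2Sq u = m)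
    (hinf : ∀ v : Euc N → ℝ, l2Sq v = m → Im ≤ Ffun G v)
    (hpoho : (((N : ℝ) - 2) / 2) * gradSq u
        + (N : ℝ) * ((μ / 2) * l2Sq u - intG G u) = 0) :
    (μ * (N : ℝ) / 2) * m = -(N : ℝ) * Ffun G u + gradSq u ∧ 0 < μ := by
  have hg : 0 ≤ gradSq u := integral_nonneg fun x => by positivity
  have hNpos : (0:ℝ) < N := by exact_mod_cast Nat.lt_of_lt_of_le Nat.zero_lt_two hN
  have heq : (μ * (N : ℝ) / 2) * m = -(N : ℝ) * Ffun G u + gradSq u := by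
    have := hpoho
    rw [hsphere] at this
    unfold Ffun
    nlinarith [this]
  refine ⟨heq, ?_⟩
  have h2 : 0 < (μ * (N : ℝ) / 2) * m := by
    rw [heq, hFu]; nlinarith
  nlinarith [mul_pos hNpos hm]
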